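/- arXiv:2308.15800 — 2 statements merged into one kernel-verified Lean document; each statement's English description precedes it below -/
import Mathlib

section
/- Let Φ = (X, R, X^∨, R^∨) be a reduced root datum which is simply laced, meaning ⟨α, β^∨⟩ ∈ {−1, 0, 1} for all roots α, β with β ≠ α and β ≠ −α. If α and β are roots with β ≠ ±α such that α + β is again a root, then (α + β)^∨ = α^∨ + β^∨. -/
/-- A root datum `(X, R, X^∨, R^∨)`: finite-rank free `ℤ`-modules `X` and `Y = X^∨` in
perfect duality `pair`, a finite set of roots `R ⊆ X ∖ {0}`, a finite set of coroots
`Rv ⊆ Y`, and a bijection `α ↦ α^∨` (encoded by the function `coroot`) with `⟨α, α^∨⟩ = 2`,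
such that the reflections `s_α` and `s_{α^∨}` preserve `R` and `Rv` respectively, and are
compatible: `s_α(β)^∨ = s_{α^∨}(β^∨)`. -/
structure RootDatum' (X Y : Type*) [AddCommGroup X] [Module ℤ X]
    [AddCommGroup Y] [Module ℤ Y] where
  pair : X →ₗ[ℤ] Y →ₗ[ℤ] ℤ
  freeX : Module.Free ℤ X
  finiteX : Module.Finite ℤ X
  freeY : Module.Free ℤ Y
  finiteY : Module.Finite ℤ Y
  perfectLeft : Function.Bijective fun x : X => pair x
  perfectRight : Function.Bijective fun y : Y => pair.flip y
  R : Finset X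
  Rv : Finset Y
  coroot : X → Y
  root_ne_zero : ∀ α ∈ R, α ≠ (0 : X)
  coroot_mem : ∀ α ∈ R, coroot α ∈ Rv
  coroot_surjOn : ∀ b ∈ Rv, ∃ α ∈ R, coroot α = b
  coroot_injOn : ∀ α ∈ R, ∀ β ∈ R, coroot α = coroot β → α = β
  pair_coroot_self : ∀ α ∈ R, pair α (coroot α) = 2
  reflect_mem : ∀ α ∈ R, ∀ β ∈ R, β - pair β (coroot α) • α ∈ R
  coreflect_mem : ∀ α ∈ R, ∀ β ∈ R,
    coroot β - pair α (coroot β) • coroot α ∈ Rv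
  reflect_coroot : ∀ α ∈ R, ∀ β ∈ R,
    coroot (β - pair β (coroot α) • α) = coroot β - pair α (coroot β) • coroot α

namespace RootDatum'

variable {X Y : Type*} [AddCommGroup X] [Module ℤ X] [AddCommGroup Y] [Module ℤ Y]

/-- The additive closure `S^ac = (ℤ-span of S) ∩ R` of a subset `S` of the roots. -/
def ac (Φ : RootDatum' X Y) (S : Set X) : Set X :=
  {α : X | α ∈ Φ.R ∧ α ∈ Submodule.span ℤ S}

/-- A root datum is reduced if the only multiples of a root `α` lying in `R` are `±α`. -/
def IsReduced (Φ : RootDatum' X Y) : Prop :=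
  ∀ α ∈ Φ.R, ∀ c : ℤ, c • α ∈ Φ.R → c • α = α ∨ c • α = -α

/-- A root datum is simply laced if `⟨α, β^∨⟩ ∈ {-1, 0, 1}` for all roots `α, β` with
`β ≠ ±α`. -/
def IsSimplyLaced (Φ : RootDatum' X Y) : Prop :=
  ∀ α ∈ Φ.R, ∀ β ∈ Φ.R, β ≠ α → β ≠ -α →
    Φ.pair α (Φ.coroot β) ∈ ({-1, 0, 1} : Set ℤ)

/-- An involution `θ` of a root datum: a pair of `ℤ`-linear involutions of `X` and of
`X^∨` preserving the pairing, with `θ(R) = R`, `θ(R^∨) = R^∨`, and `θ(α)^∨ = θ(α^∨)`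
for every root `α`. -/
structure Involution (Φ : RootDatum' X Y) where
  θ : X →ₗ[ℤ] X
  θv : Y →ₗ[ℤ] Y
  θ_invol : ∀ x, θ (θ x) = x
  θv_invol : ∀ y, θv (θv y) = y
  pair_invariant : ∀ x y, Φ.pair (θ x) (θv y) = Φ.pair x y
  maps_roots : θ '' (Φ.R : Set X) = (Φ.R : Set X)
  maps_coroots : θv '' (Φ.Rv : Set Y) = (Φ.Rv : Set Y)
  coroot_comm : ∀ α ∈ Φ.R, Φ.coroot (θ α) = θv (Φ.coroot α)

/-- A system of positive roots `Φ^+ ⊆ R`: exactly one of `α, -α` is positive for each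
root `α`, and a sum of two positive roots which is a root is positive. -/
structure PositiveSystem (Φ : RootDatum' X Y) where
  Pos : Finset X
  subset_roots : Pos ⊆ Φ.R
  mem_or_neg_mem : ∀ α ∈ Φ.R, α ∈ Pos ∨ -α ∈ Pos
  neg_not_mem : ∀ α ∈ Pos, -α ∉ Pos
  add_mem : ∀ α ∈ Pos, ∀ β ∈ Pos, α + β ∈ Φ.R → α + β ∈ Pos

/-- A positive system is a `θ`-order if `α ∈ Φ^+` and `θα ≠ α` imply `-θα ∈ Φ^+`. -/
def Involution.IsThetaOrder {Φ : RootDatum' X Y} (T : Φ.Involution)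
    (P : Φ.PositiveSystem) : Prop :=
  ∀ α ∈ P.Pos, T.θ α ≠ α → -T.θ α ∈ P.Pos

/-- A system of positive roots together with the corresponding set `Δ` of simple roots:
`Δ` is linearly independent and the positive roots are exactly the roots which are
nonnegative integral combinations of `Δ`. -/
structure BasedPositiveSystem (Φ : RootDatum' X Y) extends PositiveSystem Φ where
  Δ : Finset X
  simple_subset : Δ ⊆ Pos
  linIndep : LinearIndependent ℤ (fun β : {x : X // x ∈ Δ} => (β : X))
  pos_iff : ∀ α ∈ Φ.R, (α ∈ Pos ↔ ∃ c : X → ℕ, α = ∑ β ∈ Δ, (c β : ℤ) • β)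

variable {Φ : RootDatum' X Y}

/-- The set `Δ^θ = Δ ∩ Φ^θ` of `θ`-fixed simple roots. -/
def Involution.simpleFixed (T : Φ.Involution) (B : Φ.BasedPositiveSystem) : Set X :=
  {β : X | β ∈ B.Δ ∧ T.θ β = β}

/-- The set `Δ_θ = {α ∈ Δ ∖ Δ^θ : α − θα ∉ R} ∪ {α − θα : α ∈ Δ, α − θα ∈ R}`. -/
def Involution.deltaTheta (T : Φ.Involution) (B : Φ.BasedPositiveSystem) : Set X :=
  {α : X | α ∈ B.Δ ∧ T.θ α ≠ α ∧ α - T.θ α ∉ Φ.R} ∪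
    {x : X | ∃ α ∈ B.Δ, x = α - T.θ α ∧ x ∈ Φ.R}

/-- The set `Σ_θ = Δ_θ ∪ (−θ)(Δ_θ)`. -/
def Involution.sigmaTheta (T : Φ.Involution) (B : Φ.BasedPositiveSystem) : Set X :=
  T.deltaTheta B ∪ (fun α => -T.θ α) '' T.deltaTheta B

/-- The set `Σ_θ^1` of type-1 elements (`−θα = α`) of `Σ_θ`. -/
def Involution.sigmaTheta1 (T : Φ.Involution) (B : Φ.BasedPositiveSystem) : Set X :=
  {α : X | α ∈ T.sigmaTheta B ∧ -T.θ α = α}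

/-- The set `Σ_θ^2 = {α − θα : α ∈ Σ_θ, α of type 2}`. -/
def Involution.sigmaTheta2 (T : Φ.Involution) (B : Φ.BasedPositiveSystem) : Set X :=
  {x : X | ∃ α ∈ T.sigmaTheta B, -T.θ α ≠ α ∧ x = α - T.θ α}

/-- The Helminck hypothesis: there is an involutive permutation `θ*` of `Δ ∖ Δ^θ` such
that `−θα = θ*α + γ_α` with `γ_α` in the `ℤ`-span of `Δ^θ`, for all `α ∈ Δ ∖ Δ^θ`. -/
def Involution.Helminck (T : Φ.Involution) (B : Φ.BasedPositiveSystem) : Prop :=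
  ∃ θs : X → X,
    (∀ α, α ∈ B.Δ → T.θ α ≠ α → (θs α ∈ B.Δ ∧ T.θ (θs α) ≠ θs α)) ∧
    (∀ α, α ∈ B.Δ → T.θ α ≠ α → θs (θs α) = α) ∧
    (∀ α, α ∈ B.Δ → T.θ α ≠ α →
      -T.θ α - θs α ∈ Submodule.span ℤ (T.simpleFixed B))

/-- The admissibility hypothesis: `γ + θγ` is never a root. -/
def Involution.Admissible (T : Φ.Involution) : Prop :=
  ∀ γ ∈ Φ.R, γ + T.θ γ ∉ Φ.R

end RootDatum'

/-- in a reduced simply laced root datum, if `α, β` are roots with `β ≠ ±α`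
and `α + β` is a root, then `(α + β)^∨ = α^∨ + β^∨`. -/
theorem statement1 {X Y : Type*} [AddCommGroup X] [Module ℤ X] [AddCommGroup Y] [Module ℤ Y]
    (Φ : RootDatum' X Y) (hred : Φ.IsReduced) (hsl : Φ.IsSimplyLaced)
    {α β : X} (hα : α ∈ Φ.R) (hβ : β ∈ Φ.R) (hne : β ≠ α) (hne' : β ≠ -α)
    (hsum : α + β ∈ Φ.R) :
    Φ.coroot (α + β) = Φ.coroot α + Φ.coroot β := by
  have e1 : ∀ x : X, (-1 : ℤ) • x = -x := fun x => by simp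
  have e2 : ∀ y : Y, (-1 : ℤ) • y = -y := fun y => by simp
  have hα0 : α ≠ 0 := Φ.root_ne_zero α hα
  have hβ0 : β ≠ 0 := Φ.root_ne_zero β hβ
  -- no root γ has -(γ+γ) a root
  have aux : ∀ γ ∈ Φ.R, -(γ + γ) ∉ Φ.R := by
    intro γ hγ hmem
    have hmem' : (-2 : ℤ) • γ ∈ Φ.R := by
      rwa [show (-2 : ℤ) • γ = -(γ + γ) from by simp [two_smul]; abel]
    rcases hred γ hγ (-2) hmem' with h2 | h2 <;>
    · have := congrArg (fun x => Φ.pair x (Φ.coroot γ)) h2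
      simp only [map_zsmul, LinearMap.smul_apply, smul_eq_mul, map_neg,
        LinearMap.neg_apply, Φ.pair_coroot_self γ hγ] at this
      omega
  -- pair β (coroot α) = -1
  have h1 : Φ.pair β (Φ.coroot α) ∈ ({-1, 0, 1} : Set ℤ) :=
    hsl β hβ α hα (fun h => hne h.symm)
      (fun h => hne' (by rw [h, neg_neg]))
  have h2 : Φ.pair (α + β) (Φ.coroot α) ∈ ({-1, 0, 1} : Set ℤ) := by
    refine hsl (α + β) hsum α hα (fun h => hβ0 (left_eq_add.mp h)) (fun h => ?_)
    have hb : β = -(α + α) := by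
      rw [show -(α + α) = -α - α from by abel, eq_sub_iff_add_eq, add_comm]
      exact (neg_eq_iff_eq_neg.mpr h).symm
    exact aux α hα (hb ▸ hβ)
  have hpc : Φ.pair (α + β) (Φ.coroot α) = 2 + Φ.pair β (Φ.coroot α) := by
    rw [map_add, LinearMap.add_apply, Φ.pair_coroot_self α hα]
  have hba : Φ.pair β (Φ.coroot α) = -1 := by
    simp only [Set.mem_insert_iff, Set.mem_singleton_iff] at h1 h2
    omega
  -- pair α (coroot β) = -1
  have h3 : Φ.pair α (Φ.coroot β) ∈ ({-1, 0, 1} : Set ℤ) := hsl α hα β hβ hne hne'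
  have h4 : Φ.pair (α + β) (Φ.coroot β) ∈ ({-1, 0, 1} : Set ℤ) := by
    refine hsl (α + β) hsum β hβ (fun h => hα0 (right_eq_add.mp h)) (fun h => ?_)
    have hb : α = -(β + β) := by
      rw [show -(β + β) = -β - β from by abel, eq_sub_iff_add_eq]
      exact (neg_eq_iff_eq_neg.mpr h).symm
    exact aux β hβ (hb ▸ hα)
  have hpc' : Φ.pair (α + β) (Φ.coroot β) = Φ.pair α (Φ.coroot β) + 2 := by
    rw [map_add, LinearMap.add_apply, Φ.pair_coroot_self β hβ]
  have hab : Φ.pair α (Φ.coroot β) = -1 := by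
    simp only [Set.mem_insert_iff, Set.mem_singleton_iff] at h3 h4
    omega
  have key := Φ.reflect_coroot α hα β hβ
  rw [hba, hab, e1, e2, sub_neg_eq_add, sub_neg_eq_add, add_comm β α] at key
  rw [key, add_comm]
end

section
/- Let θ be an involution of a root datum Φ with a θ-order satisfying the Helminck hypothesis. Then a root α satisfies θα = α if and only if α lies in the ℤ-span of Δ^θ = Δ ∩ Φ^θ. -/
section Aux

private lemma aux_lin13 {X : Type*} [AddCommGroup X] [Module ℤ X] (Δ : Finset X)
    (hli : LinearIndependent ℤ (fun β : {x : X // x ∈ Δ} => (β : X)))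
    (g : X → ℤ) (h : ∑ β ∈ Δ, g β • β = 0) : ∀ β ∈ Δ, g β = 0 := by
  simp only [← Int.cast_smul_eq_zsmul ℤ, Int.cast_id] at h
  intro β hβ
  exact linearIndependent_iff'.mp hli Δ.attach (fun b => g b)
    ((Finset.sum_attach Δ _).trans h) ⟨β, hβ⟩ (Finset.mem_attach _ _)

private lemma aux_span13 {X : Type*} [AddCommGroup X] [Module ℤ X] (F : Finset X) (x : X)
    (h : x ∈ Submodule.span ℤ (↑F : Set X)) : ∃ f : X → ℤ, ∑ i ∈ F, f i • i = x := by
  obtain ⟨f, -, hf⟩ := Submodule.mem_span_finset.mp h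
  exact ⟨f, by simpa [← Int.cast_smul_eq_zsmul ℤ, Int.cast_id] using hf⟩

end Aux

/-- under the Helminck hypothesis, a root `α` satisfies `θα = α` if and
only if `α` lies in the `ℤ`-span of `Δ^θ = Δ ∩ Φ^θ`. -/
theorem statement13 {X Y : Type*} [AddCommGroup X] [Module ℤ X] [AddCommGroup Y] [Module ℤ Y]
    (Φ : RootDatum' X Y) (T : Φ.Involution) (B : Φ.BasedPositiveSystem)
    (hord : T.IsThetaOrder B.toPositiveSystem) (hH : T.Helminck B) :
    ∀ α ∈ Φ.R, (T.θ α = α ↔ α ∈ Submodule.span ℤ (T.simpleFixed B)) := by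
  classical
  obtain ⟨θs, hθs1, hθs2, hθs3⟩ := hH
  set M := Submodule.span ℤ (T.simpleFixed B) with hM
  -- reverse direction: θ fixes everything in M
  have hrev : ∀ x ∈ M, T.θ x = x := by
    intro x hx
    have hle : M ≤ LinearMap.ker (T.θ - LinearMap.id) := by
      rw [hM, Submodule.span_le]
      rintro y ⟨hy1, hy2⟩
      simp [LinearMap.mem_ker, LinearMap.sub_apply, hy2]
    have h0 : T.θ x - x = 0 := by
      simpa [LinearMap.mem_ker, LinearMap.sub_apply] using hle hx
    exact sub_eq_zero.mp h0
  set F : Finset X := B.Δ.filter (fun β => T.θ β = β) with hF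
  set N : Finset X := B.Δ.filter (fun β => ¬ T.θ β = β) with hN
  have hFset : (↑F : Set X) = T.simpleFixed B := by
    ext β
    simp [hF, RootDatum'.Involution.simpleFixed]
  have hNmem : ∀ β ∈ N, β ∈ B.Δ ∧ T.θ β ≠ β := by
    intro β hβ
    simpa [hN, Finset.mem_filter] using hβ
  have hFmem : ∀ β ∈ F, β ∈ B.Δ ∧ T.θ β = β := by
    intro β hβ
    simpa [hF, Finset.mem_filter] using hβ
  have hθsN : ∀ β ∈ N, θs β ∈ N := by
    intro β hβ
    obtain ⟨h1, h2⟩ := hNmem β hβ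
    obtain ⟨h3, h4⟩ := hθs1 β h1 h2
    rw [hN]
    simp only [Finset.mem_filter]
    exact ⟨h3, h4⟩
  have hθsInv : ∀ β ∈ N, θs (θs β) = β := by
    intro β hβ
    obtain ⟨h1, h2⟩ := hNmem β hβ
    exact hθs2 β h1 h2
  have aux : ∀ α ∈ B.Pos, T.θ α = α → α ∈ M := by
    intro α hpos hfix
    obtain ⟨c, hc⟩ := (B.pos_iff α (B.subset_roots hpos)).mp hpos
    have hsplit : α = ∑ β ∈ F, (c β : ℤ) • β + ∑ β ∈ N, (c β : ℤ) • β := by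
      rw [hc]
      exact (Finset.sum_filter_add_sum_filter_not B.Δ _ _).symm
    have hθα : T.θ α = ∑ β ∈ F, (c β : ℤ) • β + ∑ β ∈ N, (c β : ℤ) • T.θ β := by
      conv_lhs => rw [hsplit]
      rw [map_add, map_sum, map_sum]
      congr 1
      · refine Finset.sum_congr rfl fun β hβ => ?_
        rw [map_zsmul, (hFmem β hβ).2]
      · refine Finset.sum_congr rfl fun β hβ => ?_
        rw [map_zsmul]
    have hkey : ∑ β ∈ N, (c β : ℤ) • β = ∑ β ∈ N, (c β : ℤ) • T.θ β :=
      add_left_cancel (hsplit.symm.trans (hfix.symm.trans hθα))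
    have hw : (∑ β ∈ N, (c β : ℤ) • β + ∑ β ∈ N, (c β : ℤ) • θs β) ∈ M := by
      rw [hkey, ← Finset.sum_add_distrib]
      apply Submodule.sum_mem
      intro β hβ
      obtain ⟨hβΔ, hβn⟩ := hNmem β hβ
      have hγ : -T.θ β - θs β ∈ M := hθs3 β hβΔ hβn
      have heq : (c β : ℤ) • T.θ β + (c β : ℤ) • θs β
          = -((c β : ℤ) • (-T.θ β - θs β)) := by
        simp only [← Int.cast_smul_eq_zsmul ℤ, Int.cast_id]
        module
      rw [heq]
      exact M.neg_mem (zsmul_mem hγ _)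
    have hre : ∑ β ∈ N, (c β : ℤ) • θs β = ∑ β ∈ N, (c (θs β) : ℤ) • β := by
      refine Finset.sum_nbij' (i := θs) (j := θs) hθsN hθsN hθsInv hθsInv ?_
      intro β hβ
      rw [hθsInv β hβ]
    have hv : (∑ β ∈ N, ((c β : ℤ) + (c (θs β) : ℤ)) • β) ∈ M := by
      have he : ∑ β ∈ N, ((c β : ℤ) + (c (θs β) : ℤ)) • β
          = ∑ β ∈ N, (c β : ℤ) • β + ∑ β ∈ N, (c β : ℤ) • θs β := by
        rw [hre, ← Finset.sum_add_distrib]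
        exact Finset.sum_congr rfl fun β hβ => add_zsmul β _ _
      rw [he]
      exact hw
    have hvF : (∑ β ∈ N, ((c β : ℤ) + (c (θs β) : ℤ)) • β) ∈
        Submodule.span ℤ (↑F : Set X) := by
      rw [hFset]
      exact hv
    obtain ⟨f, hf⟩ := aux_span13 F _ hvF
    set g : X → ℤ := fun β => if T.θ β = β then f β
      else -((c β : ℤ) + (c (θs β) : ℤ)) with hg
    have hzero : ∑ β ∈ B.Δ, g β • β = 0 := by
      rw [← Finset.sum_filter_add_sum_filter_not B.Δ (fun β => T.θ β = β)
        (fun β => g β • β), ← hF, ← hN]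
      have e1 : ∑ β ∈ F, g β • β = ∑ β ∈ F, f β • β := by
        refine Finset.sum_congr rfl fun β hβ => ?_
        rw [hg]
        simp only [if_pos (hFmem β hβ).2]
      have e2 : ∑ β ∈ N, g β • β
          = -∑ β ∈ N, ((c β : ℤ) + (c (θs β) : ℤ)) • β := by
        rw [← Finset.sum_neg_distrib]
        refine Finset.sum_congr rfl fun β hβ => ?_
        rw [hg]
        simp only [if_neg (hNmem β hβ).2, neg_zsmul]
      rw [e1, e2, hf]
      exact add_neg_cancel _
    have hcoef := aux_lin13 B.Δ B.linIndep g hzero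
    have hcN : ∀ β ∈ N, c β = 0 := by
      intro β hβ
      obtain ⟨hβΔ, hβn⟩ := hNmem β hβ
      have h1 := hcoef β hβΔ
      rw [hg] at h1
      simp only [if_neg hβn, neg_eq_zero] at h1
      omega
    have hNzero : ∑ β ∈ N, (c β : ℤ) • β = 0 := by
      refine Finset.sum_eq_zero fun β hβ => ?_
      rw [hcN β hβ]
      simp
    rw [hsplit, hNzero, add_zero]
    refine Submodule.sum_mem _ fun β hβ => ?_
    refine zsmul_mem (Submodule.subset_span ?_) _
    rw [← hFset]
    exact_mod_cast hβ
  intro α hα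
  constructor
  · intro hfix
    rcases B.mem_or_neg_mem α hα with h | h
    · exact aux α h hfix
    · have hfix2 : T.θ (-α) = -α := by rw [map_neg, hfix]
      have hm := aux (-α) h hfix2
      simpa using M.neg_mem hm
  · intro h
    exact hrev α h
end
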